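/- Let u, v : ℝ³ → ℝ be measurable functions in L⁶(ℝ³), let M ⊆ ℝ³ be a measurable set of finite measure, and let V, W : ℝ³ → [0,∞) be measurable with V(x)W(x) > c² for all x in the complement of M, where c > 0. Assume ∫ V u² dx < ∞ and ∫ W v² dx < ∞. Then ∫_{ℝ³} |u v| dx ≤ ‖u‖₆ ‖v‖₆ |M|^{2/3} + (1/(2c)) ∫_{ℝ³} (V u² + W v²) dx. -/

import Mathlib

open MeasureTheory
open scoped ENNReal

theorem stmt_3 (u v V W : (Fin 3 → ℝ) → ℝ) (c : ℝ) (hc : 0 < c)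
    (hu : Measurable u) (hv : Measurable v)
    (hV : Measurable V) (hW : Measurable W)
    (hV0 : ∀ x, 0 ≤ V x) (hW0 : ∀ x, 0 ≤ W x)
    (M : Set (Fin 3 → ℝ)) (hM : MeasurableSet M) (hMfin : volume M < ⊤)
    (hVW : ∀ x ∉ M, c ^ 2 < V x * W x)
    (hu6 : MemLp u 6 volume) (hv6 : MemLp v 6 volume)
    (huV : Integrable (fun x => V x * (u x) ^ 2))
    (hvW : Integrable (fun x => W x * (v x) ^ 2)) :
    ∫ x, |u x * v x| ≤
      (∫ x, |u x| ^ (6 : ℝ)) ^ ((1 : ℝ) / 6) * (∫ x, |v x| ^ (6 : ℝ)) ^ ((1 : ℝ) / 6) *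
        (volume M).toReal ^ ((2 : ℝ) / 3) +
      (1 / (2 * c)) * ∫ x, (V x * (u x) ^ 2 + W x * (v x) ^ 2) := by
  have h2c : (0:ℝ) < 2 * c := by linarith
  set f : (Fin 3 → ℝ) → ℝ := fun x => |u x * v x| with hfdef
  set g : (Fin 3 → ℝ) → ℝ := fun x => (1 / (2 * c)) * (V x * (u x) ^ 2 + W x * (v x) ^ 2)
    with hgdef
  haveI hFin : IsFiniteMeasure (volume.restrict M) :=
    ⟨by rwa [Measure.restrict_apply_univ]⟩
  -- pointwise bound off M
  have hpt : ∀ x ∉ M, f x ≤ g x := by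
    intro x hx
    have h1 : c ≤ Real.sqrt (V x * W x) :=
      (Real.le_sqrt hc.le (mul_nonneg (hV0 x) (hW0 x))).mpr (le_of_lt (hVW x hx))
    have h2 : Real.sqrt (V x * W x) * |u x * v x|
        = (Real.sqrt (V x) * |u x|) * (Real.sqrt (W x) * |v x|) := by
      rw [Real.sqrt_mul (hV0 x), abs_mul]; ring
    have h3 := two_mul_le_add_sq (Real.sqrt (V x) * |u x|) (Real.sqrt (W x) * |v x|)
    have h4 : (Real.sqrt (V x) * |u x|) ^ 2 = V x * (u x) ^ 2 := by
      rw [mul_pow, Real.sq_sqrt (hV0 x), sq_abs]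
    have h5 : (Real.sqrt (W x) * |v x|) ^ 2 = W x * (v x) ^ 2 := by
      rw [mul_pow, Real.sq_sqrt (hW0 x), sq_abs]
    have h6 : 2 * c * |u x * v x| ≤ V x * (u x) ^ 2 + W x * (v x) ^ 2 := by
      nlinarith [abs_nonneg (u x * v x), h3, h4, h5, h2, h1]
    have h7 : |u x * v x| ≤ (V x * (u x) ^ 2 + W x * (v x) ^ 2) / (2 * c) :=
      (le_div_iff₀ h2c).mpr (by rw [mul_comm]; exact h6)
    simpa [hfdef, hgdef, one_div, div_eq_inv_mul] using h7
  -- L³ membership of the product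
  have hthird : (1:ℝ≥0∞)/3 = 1/6 + 1/6 := by
    have : ((1:ℝ≥0∞)/3).toReal = ((1:ℝ≥0∞)/6 + 1/6).toReal := by
      rw [ENNReal.toReal_add (by norm_num) (by norm_num)]
      simp [ENNReal.toReal_div]; norm_num
    exact (ENNReal.toReal_eq_toReal_iff' (by norm_num) (by norm_num)).mp this
  have huv3 : MemLp (fun x => u x * v x) 3 volume := hv6.smul (𝕜 := ℝ) hu6 (hpqr := ⟨by simpa [one_div] using hthird.symm⟩)
  have hintM : IntegrableOn f M volume :=
    (Integrable.abs ((huv3.restrict M).integrable (by norm_num)))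
  have hbound : Integrable g volume := (huV.add hvW).const_mul _
  have hintMc : IntegrableOn f Mᶜ volume := by
    refine Integrable.mono' hbound.integrableOn ((hu.mul hv).abs.aestronglyMeasurable) ?_
    rw [ae_restrict_iff' hM.compl]
    filter_upwards with x hx
    simpa [hfdef, abs_abs] using hpt x hx
  have hint : Integrable f volume := by
    rw [← integrableOn_univ, ← Set.union_compl_self M]
    exact hintM.union hintMc
  -- complement part
  have hgnn : ∀ x, 0 ≤ g x := fun x => by
    have := hV0 x; have := hW0 x
    have : (0:ℝ) ≤ V x * (u x)^2 + W x * (v x)^2 := by positivity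
    exact mul_nonneg (by positivity) this
  have hMc_le : (∫ x in Mᶜ, f x) ≤ (1 / (2 * c)) * ∫ x, (V x * (u x) ^ 2 + W x * (v x) ^ 2) := by
    calc (∫ x in Mᶜ, f x) ≤ ∫ x in Mᶜ, g x :=
          setIntegral_mono_on hintMc hbound.integrableOn hM.compl (fun x hx => hpt x hx)
      _ ≤ ∫ x, g x := setIntegral_le_integral hbound (Filter.Eventually.of_forall hgnn)
      _ = (1 / (2 * c)) * ∫ x, (V x * (u x) ^ 2 + W x * (v x) ^ 2) := by
          rw [hgdef]; exact integral_const_mul _ _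
  -- Hölder on M
  have hAnn : (0:ℝ) ≤ ∫ x, |u x| ^ (6:ℝ) :=
    integral_nonneg (fun x => by positivity)
  have hBnn : (0:ℝ) ≤ ∫ x, |v x| ^ (6:ℝ) :=
    integral_nonneg (fun x => by positivity)
  have hIu : Integrable (fun x => |u x| ^ (6:ℝ)) volume := by
    simpa [Real.norm_eq_abs] using hu6.integrable_norm_rpow (by norm_num) (by norm_num)
  have hIv : Integrable (fun x => |v x| ^ (6:ℝ)) volume := by
    simpa [Real.norm_eq_abs] using hv6.integrable_norm_rpow (by norm_num) (by norm_num)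
  have hAu : (∫ x in M, |u x| ^ (6:ℝ)) ≤ ∫ x, |u x| ^ (6:ℝ) :=
    setIntegral_le_integral hIu (Filter.Eventually.of_forall (fun x => by positivity))
  have hAv : (∫ x in M, |v x| ^ (6:ℝ)) ≤ ∫ x, |v x| ^ (6:ℝ) :=
    setIntegral_le_integral hIv (Filter.Eventually.of_forall (fun x => by positivity))
  -- step 2 : Cauchy-Schwarz for |u|^3 * |v|^3 on M
  have hpq2 : Real.HolderConjugate 2 2 := ⟨by norm_num, by norm_num, by norm_num⟩
  have hmemu3 : MemLp (fun x => |u x| ^ (3:ℝ)) (ENNReal.ofReal 2) (volume.restrict M) := by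
    have h := (hu6.restrict M).norm_rpow_div 3
    have e1 : ((3:ℝ≥0∞)).toReal = (3:ℝ) := by norm_num
    have e2 : (6:ℝ≥0∞)/3 = ENNReal.ofReal 2 := by
      rw [show ENNReal.ofReal (2:ℝ) = 2 by norm_num]
      exact ((ENNReal.eq_div_iff (by norm_num) (by norm_num)).mpr (by norm_num)).symm
    rw [e2] at h
    simpa [Real.norm_eq_abs, e1] using h
  have hmemv3 : MemLp (fun x => |v x| ^ (3:ℝ)) (ENNReal.ofReal 2) (volume.restrict M) := by
    have h := (hv6.restrict M).norm_rpow_div 3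
    have e1 : ((3:ℝ≥0∞)).toReal = (3:ℝ) := by norm_num
    have e2 : (6:ℝ≥0∞)/3 = ENNReal.ofReal 2 := by
      rw [show ENNReal.ofReal (2:ℝ) = 2 by norm_num]
      exact ((ENNReal.eq_div_iff (by norm_num) (by norm_num)).mpr (by norm_num)).symm
    rw [e2] at h
    simpa [Real.norm_eq_abs, e1] using h
  have hCS : (∫ x in M, (|u x| ^ (3:ℝ)) * (|v x| ^ (3:ℝ)))
      ≤ (∫ x in M, |u x| ^ (6:ℝ)) ^ ((1:ℝ)/2) * (∫ x in M, |v x| ^ (6:ℝ)) ^ ((1:ℝ)/2) := by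
    have h := integral_mul_le_Lp_mul_Lq_of_nonneg (μ := volume.restrict M) hpq2
      (Filter.Eventually.of_forall (fun x => by positivity))
      (Filter.Eventually.of_forall (fun x => by positivity)) hmemu3 hmemv3
    have eu : (∫ x in M, (|u x| ^ (3:ℝ)) ^ (2:ℝ)) = ∫ x in M, |u x| ^ (6:ℝ) := by
      refine integral_congr_ae (Filter.Eventually.of_forall (fun x => ?_))
      show (|u x| ^ (3:ℝ)) ^ (2:ℝ) = |u x| ^ (6:ℝ)
      rw [← Real.rpow_mul (abs_nonneg _)]; norm_num
    have ev : (∫ x in M, (|v x| ^ (3:ℝ)) ^ (2:ℝ)) = ∫ x in M, |v x| ^ (6:ℝ) := by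
      refine integral_congr_ae (Filter.Eventually.of_forall (fun x => ?_))
      show (|v x| ^ (3:ℝ)) ^ (2:ℝ) = |v x| ^ (6:ℝ)
      rw [← Real.rpow_mul (abs_nonneg _)]; norm_num
    rw [eu, ev] at h
    exact h
  -- step 1 : Hölder with exponents 3 and 3/2 on M
  have hpq1 : Real.HolderConjugate 3 (3/2) := ⟨by norm_num, by norm_num, by norm_num⟩
  have hmemf3 : MemLp f (ENNReal.ofReal 3) (volume.restrict M) := by
    have h := (huv3.restrict M).norm
    rw [show ENNReal.ofReal (3:ℝ) = 3 by norm_num]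
    simp only [Real.norm_eq_abs] at h
    exact h
  have hmem1 : MemLp (fun _ : Fin 3 → ℝ => (1:ℝ)) (ENNReal.ofReal (3/2))
      (volume.restrict M) := memLp_const 1
  have h1 := integral_mul_le_Lp_mul_Lq_of_nonneg (μ := volume.restrict M) hpq1
    (Filter.Eventually.of_forall fun x => abs_nonneg _)
    (Filter.Eventually.of_forall fun _ => zero_le_one) hmemf3 hmem1
  simp only [mul_one, Real.one_rpow] at h1
  rw [integral_const, measureReal_restrict_apply_univ, measureReal_def, smul_eq_mul, mul_one,
    show (1:ℝ)/(3/2) = 2/3 by norm_num] at h1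
  have hfcube : (∫ x in M, f x ^ (3:ℝ)) = ∫ x in M, (|u x| ^ (3:ℝ)) * (|v x| ^ (3:ℝ)) := by
    refine integral_congr_ae (Filter.Eventually.of_forall (fun x => ?_))
    show |u x * v x| ^ (3:ℝ) = (|u x| ^ (3:ℝ)) * (|v x| ^ (3:ℝ))
    rw [abs_mul, Real.mul_rpow (abs_nonneg _) (abs_nonneg _)]
  have hSu0 : (0:ℝ) ≤ ∫ x in M, |u x| ^ (6:ℝ) := integral_nonneg (fun x => by positivity)
  have hSv0 : (0:ℝ) ≤ ∫ x in M, |v x| ^ (6:ℝ) := integral_nonneg (fun x => by positivity)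
  have hT0 : (0:ℝ) ≤ ∫ x in M, f x ^ (3:ℝ) := integral_nonneg (fun x => by positivity)
  have hT_le : (∫ x in M, f x ^ (3:ℝ))
      ≤ (∫ x, |u x| ^ (6:ℝ)) ^ ((1:ℝ)/2) * (∫ x, |v x| ^ (6:ℝ)) ^ ((1:ℝ)/2) := by
    rw [hfcube]
    refine hCS.trans (mul_le_mul (Real.rpow_le_rpow hSu0 hAu (by norm_num))
      (Real.rpow_le_rpow hSv0 hAv (by norm_num)) (by positivity) (by positivity))
  have hM_le : (∫ x in M, f x)
      ≤ (∫ x, |u x| ^ (6:ℝ)) ^ ((1:ℝ)/6) * (∫ x, |v x| ^ (6:ℝ)) ^ ((1:ℝ)/6) *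
        (volume M).toReal ^ ((2:ℝ)/3) := by
    refine h1.trans ?_
    refine mul_le_mul_of_nonneg_right ?_ (Real.rpow_nonneg ENNReal.toReal_nonneg _)
    calc (∫ x in M, f x ^ (3:ℝ)) ^ ((1:ℝ)/3)
        ≤ ((∫ x, |u x| ^ (6:ℝ)) ^ ((1:ℝ)/2) * (∫ x, |v x| ^ (6:ℝ)) ^ ((1:ℝ)/2)) ^ ((1:ℝ)/3) :=
          Real.rpow_le_rpow hT0 hT_le (by norm_num)
      _ = (∫ x, |u x| ^ (6:ℝ)) ^ ((1:ℝ)/6) * (∫ x, |v x| ^ (6:ℝ)) ^ ((1:ℝ)/6) := by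
          rw [Real.mul_rpow (by positivity) (by positivity),
            ← Real.rpow_mul hAnn, ← Real.rpow_mul hBnn]
          norm_num
  rw [← integral_add_compl hM hint]
  exact add_le_add hM_le hMc_le
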